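/- Let A₁ = diag(1/2, 1), A₂ = diag(1, 1/2), M₁ = diag(4, 1), M₂ = diag(1, 4) be 2×2 real diagonal matrices. Then for every s > 0: (1/2)·tr((A₁ M₁ A₁)^s) + (1/2)·tr((A₂ M₂ A₂)^s) − tr((((A₁+A₂)/2)((M₁+M₂)/2)((A₁+A₂)/2))^s) = 2 − 2·(45/32)^s, which is strictly negative. -/

import Mathlib

open Matrix

/-- Real power of a real symmetric matrix via the spectral functional calculus
(junk value `0` for non-symmetric matrices). -/
noncomputable def matRpow {n : Type*} [Fintype n] [DecidableEq n]
    (r : ℝ) (A : Matrix n n ℝ) : Matrix n n ℝ :=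
  if hA : A.IsHermitian then
    (hA.eigenvectorUnitary : Matrix n n ℝ) *
      Matrix.diagonal (fun i => (hA.eigenvalues i ^ r : ℝ)) *
      (hA.eigenvectorUnitary : Matrix n n ℝ)ᴴ
  else 0

lemma eigenvalues_diag_const {n : Type*} [Fintype n] [DecidableEq n] (c : ℝ)
    (h : (Matrix.diagonal (fun _ : n => c)).IsHermitian) (i : n) :
    h.eigenvalues i = c := by
  have hd : star (h.eigenvectorUnitary : Matrix n n ℝ) * Matrix.diagonal (fun _ : n => c) *
      (h.eigenvectorUnitary : Matrix n n ℝ) = Matrix.diagonal (RCLike.ofReal ∘ h.eigenvalues) := by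
    have := h.conjStarAlgAut_star_eigenvectorUnitary
    rw [Unitary.conjStarAlgAut_apply, Unitary.coe_star, star_star] at this
    exact this
  set U := (h.eigenvectorUnitary : Matrix n n ℝ) with hUdef
  have hU : star U * U = 1 := Matrix.mem_unitaryGroup_iff'.mp h.eigenvectorUnitary.2
  have hsm : star U * Matrix.diagonal (fun _ : n => c) * U =
      Matrix.diagonal (fun _ : n => c) := by
    rw [← Matrix.smul_one_eq_diagonal, Matrix.mul_smul, Matrix.smul_mul, mul_one, hU]
  have hd2 := hsm.symm.trans hd
  have := congrFun (congrFun hd2 i) i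
  simpa using this.symm

lemma trace_matRpow_diag_const {n : Type*} [Fintype n] [DecidableEq n] (r c : ℝ) :
    (matRpow r (Matrix.diagonal (fun _ : n => c))).trace =
      (Fintype.card n : ℝ) * c ^ r := by
  have h : (Matrix.diagonal (fun _ : n => c)).IsHermitian := Matrix.isHermitian_diagonal _
  rw [matRpow, dif_pos h]
  set U := (h.eigenvectorUnitary : Matrix n n ℝ) with hUdef
  have hU : Uᴴ * U = 1 := by
    rw [← Matrix.star_eq_conjTranspose]
    exact Matrix.mem_unitaryGroup_iff'.mp h.eigenvectorUnitary.2
  rw [Matrix.trace_mul_cycle, hU, one_mul, Matrix.trace_diagonal]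
  simp [eigenvalues_diag_const c h, Finset.sum_const, mul_comm]

/-- Midpoint joint-convexity defect for `A₁ = diag(1/2,1)`, `A₂ = diag(1,1/2)`,
`M₁ = diag(4,1)`, `M₂ = diag(1,4)`: it equals `2 - 2 (45/32)^s < 0` for `s > 0`. -/
theorem midpoint_defect (s : ℝ) (hs : 0 < s) :
    (1/2) * (matRpow s (Matrix.diagonal ![(1:ℝ)/2, 1] * Matrix.diagonal ![(4:ℝ), 1] *
        Matrix.diagonal ![(1:ℝ)/2, 1])).trace +
      (1/2) * (matRpow s (Matrix.diagonal ![(1:ℝ), 1/2] * Matrix.diagonal ![(1:ℝ), 4] *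
        Matrix.diagonal ![(1:ℝ), 1/2])).trace -
      (matRpow s (((1/2 : ℝ) • (Matrix.diagonal ![(1:ℝ)/2, 1] + Matrix.diagonal ![(1:ℝ), 1/2])) *
        ((1/2 : ℝ) • (Matrix.diagonal ![(4:ℝ), 1] + Matrix.diagonal ![(1:ℝ), 4])) *
        ((1/2 : ℝ) • (Matrix.diagonal ![(1:ℝ)/2, 1] + Matrix.diagonal ![(1:ℝ), 1/2])))).trace =
      2 - 2 * (45/32 : ℝ) ^ s ∧
    2 - 2 * (45/32 : ℝ) ^ s < 0 := by
  have e1 : Matrix.diagonal ![(1:ℝ)/2, 1] * Matrix.diagonal ![(4:ℝ), 1] *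
      Matrix.diagonal ![(1:ℝ)/2, 1] = Matrix.diagonal (fun _ : Fin 2 => (1:ℝ)) := by
    ext i j
    fin_cases i <;> fin_cases j <;>
      simp [Matrix.mul_apply, Fin.sum_univ_two, Matrix.diagonal] <;> norm_num
  have e2 : Matrix.diagonal ![(1:ℝ), 1/2] * Matrix.diagonal ![(1:ℝ), 4] *
      Matrix.diagonal ![(1:ℝ), 1/2] = Matrix.diagonal (fun _ : Fin 2 => (1:ℝ)) := by
    ext i j
    fin_cases i <;> fin_cases j <;>
      simp [Matrix.mul_apply, Fin.sum_univ_two, Matrix.diagonal] <;> norm_num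
  have e3 : ((1/2 : ℝ) • (Matrix.diagonal ![(1:ℝ)/2, 1] + Matrix.diagonal ![(1:ℝ), 1/2])) *
      ((1/2 : ℝ) • (Matrix.diagonal ![(4:ℝ), 1] + Matrix.diagonal ![(1:ℝ), 4])) *
      ((1/2 : ℝ) • (Matrix.diagonal ![(1:ℝ)/2, 1] + Matrix.diagonal ![(1:ℝ), 1/2])) =
      Matrix.diagonal (fun _ : Fin 2 => (45/32 : ℝ)) := by
    ext i j
    fin_cases i <;> fin_cases j <;>
      simp [Matrix.mul_apply, Fin.sum_univ_two, Matrix.diagonal] <;> norm_num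
  rw [e1, e2, e3, trace_matRpow_diag_const, trace_matRpow_diag_const]
  have hlt : 1 < (45/32 : ℝ) ^ s := by
    have := Real.one_lt_rpow_iff_of_pos (x := (45/32 : ℝ)) (by norm_num) (y := s)
    exact this.mpr (Or.inl ⟨by norm_num, hs⟩)
  constructor
  · rw [Real.one_rpow]
    simp [Fintype.card_fin]
    ring
  · linarith
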